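/- Let X₁, …, Xₙ have a C² cdf F on ℝ₊ⁿ with everywhere positive density, and suppose F is MTP₂. Then for any nonempty proper subset I of {1,…,n} and any points xᵢ ≤ bᵢ, with Aᵢ = {Xᵢ ≤ xᵢ} and Bᵢ = {Xᵢ ≤ bᵢ}, one has P(∩ᵢ₌₁ⁿ Aᵢ)/(P(∩_{i∈I} Aᵢ) P(∩_{i∉I} Aᵢ)) ≥ P(∩ᵢ₌₁ⁿ Bᵢ)/(P(∩_{i∈I} Bᵢ) P(∩_{i∉I} Bᵢ)). -/

import Mathlib

open MeasureTheory

/-- If the cdf of a positive random vector is C², has everywhere positive density on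
`ℝ₊ⁿ` and is MTP₂, then the Gaussian-correlation-type ratio improves under
right-truncation: the ratio `P(∩Aᵢ)/(P(∩_{i∈I}Aᵢ)P(∩_{i∉I}Aᵢ))` is at least the
corresponding ratio for larger thresholds `b`. -/
theorem stmt_4 {n : ℕ} (μ : Measure (Fin n → ℝ)) [IsProbabilityMeasure μ]
    (f : (Fin n → ℝ) → ℝ)
    (P : Finset (Fin n) → (Fin n → ℝ) → ℝ)
    (hP : ∀ (I : Finset (Fin n)) (x : Fin n → ℝ),
      P I x = (μ {v | ∀ i ∈ I, v i ≤ x i}).toReal)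
    (hfpos : ∀ x : Fin n → ℝ, (∀ i, 0 < x i) → 0 < f x)
    (hdens : ∀ x : Fin n → ℝ, P Finset.univ x = ∫ v in {v : Fin n → ℝ | ∀ i, v i ≤ x i} ∩ {v | ∀ i, 0 < v i}, f v)
    (hC2 : ContDiffOn ℝ 2 (P Finset.univ) {x : Fin n → ℝ | ∀ i, 0 < x i})
    (hMTP2 : ∀ x y : Fin n → ℝ,
      P Finset.univ x * P Finset.univ y ≤ P Finset.univ (x ⊔ y) * P Finset.univ (x ⊓ y))
    (I : Finset (Fin n)) (hIne : I.Nonempty) (hIprop : I ≠ Finset.univ)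
    (x b : Fin n → ℝ) (hx : ∀ i, 0 < x i) (hxb : ∀ i, x i ≤ b i) :
    P Finset.univ b / (P I b * P Iᶜ b) ≤ P Finset.univ x / (P I x * P Iᶜ x) := by
  classical
  -- Monotonicity of the cdf in the threshold and in the index set
  have hPmono : ∀ (J : Finset (Fin n)) (y z : Fin n → ℝ), (∀ i, y i ≤ z i) → P J y ≤ P J z := by
    intro J y z hyz
    rw [hP, hP]
    exact ENNReal.toReal_mono (measure_ne_top μ _)
      (measure_mono fun v hv i hi => le_trans (hv i hi) (hyz i))
  have hPset : ∀ (y : Fin n → ℝ) (J : Finset (Fin n)), P Finset.univ y ≤ P J y := by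
    intro y J
    rw [hP, hP]
    exact ENNReal.toReal_mono (measure_ne_top μ _)
      (measure_mono fun v hv i hi => hv i (Finset.mem_univ i))
  -- limiting lemma: P(univ, y on J, max k (z i) off J) → P(J, y)
  have key : ∀ (J : Finset (Fin n)) (y z : Fin n → ℝ),
      Filter.Tendsto (fun k : ℕ =>
        P Finset.univ (fun i => if i ∈ J then y i else max (k : ℝ) (z i)))
        Filter.atTop (nhds (P J y)) := by
    intro J y z
    set s : ℕ → Set (Fin n → ℝ) :=
      fun k => {v | ∀ i ∈ Finset.univ, v i ≤ (fun i => if i ∈ J then y i else max (k : ℝ) (z i)) i}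
      with hs
    have hmono : Monotone s := by
      intro k k' hkk v hv i hi
      have := hv i hi
      simp only at this ⊢
      split_ifs with h
      · simpa [h] using this
      · simp only [h, if_neg] at this
        exact le_trans this (max_le_max (by exact_mod_cast hkk) le_rfl)
    have hunion : (⋃ k : ℕ, s k) = {v | ∀ i ∈ J, v i ≤ y i} := by
      ext v
      simp only [Set.mem_iUnion, Set.mem_setOf_eq, hs]
      constructor
      · rintro ⟨k, hk⟩ i hi
        have := hk i (Finset.mem_univ i)
        simpa [hi] using this
      · intro hv
        refine ⟨Finset.univ.sup fun i => ⌈v i⌉₊, fun i _ => ?_⟩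
        by_cases hi : i ∈ J
        · simp [hi, hv i hi]
        · simp only [hi, if_neg, not_false_iff]
          refine le_max_of_le_left ?_
          calc v i ≤ (⌈v i⌉₊ : ℝ) := Nat.le_ceil _
            _ ≤ _ := by
              exact_mod_cast Finset.le_sup (f := fun i => ⌈v i⌉₊) (Finset.mem_univ i)
    have h1 := tendsto_measure_iUnion_atTop (μ := μ) hmono
    rw [hunion] at h1
    have h2 := (ENNReal.tendsto_toReal (measure_ne_top μ _)).comp h1
    have heq : (fun k : ℕ =>
        P Finset.univ (fun i => if i ∈ J then y i else max (k : ℝ) (z i)))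
        = ENNReal.toReal ∘ (μ ∘ s) := by
      funext k
      rw [hP]
      simp only [Function.comp_apply, hs]
    rw [← hP] at h2
    rw [heq]
    exact h2
  -- positivity of the cdf on the positive orthant
  have hFpos : ∀ y : Fin n → ℝ, (∀ i, 0 < y i) → 0 < P Finset.univ y := by
    intro y hy
    -- find M ≥ y with positive cdf value
    have h1 := key ∅ y y
    have hP1 : P (∅ : Finset (Fin n)) y = 1 := by
      rw [hP]; simp
    rw [hP1] at h1
    have := h1.eventually (eventually_gt_nhds (by norm_num : (1:ℝ)/2 < 1))
    obtain ⟨k, hk⟩ := this.exists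
    set M : Fin n → ℝ := fun i => if i ∈ (∅ : Finset (Fin n)) then y i else max (k : ℝ) (y i) with hM
    have hMy : ∀ i, y i ≤ M i := by intro i; simp [hM, le_max_of_le_right le_rfl]
    have hMpos : 0 < P Finset.univ M := lt_trans (by norm_num) hk
    -- f is integrable on the box below M
    have hint : IntegrableOn f ({v : Fin n → ℝ | ∀ i, v i ≤ M i} ∩ {v | ∀ i, 0 < v i}) := by
      by_contra hni
      rw [hdens M, integral_undef hni] at hMpos
      exact lt_irrefl _ hMpos
    have hsub : ({v : Fin n → ℝ | ∀ i, v i ≤ y i} ∩ {v | ∀ i, 0 < v i}) ⊆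
        ({v : Fin n → ℝ | ∀ i, v i ≤ M i} ∩ {v | ∀ i, 0 < v i}) := by
      rintro v ⟨hv1, hv2⟩
      exact ⟨fun i => le_trans (hv1 i) (hMy i), hv2⟩
    have hinty : IntegrableOn f ({v : Fin n → ℝ | ∀ i, v i ≤ y i} ∩ {v | ∀ i, 0 < v i}) :=
      hint.mono_set hsub
    -- the box below y intersected with the positive orthant
    set S := ({v : Fin n → ℝ | ∀ i, v i ≤ y i} ∩ {v | ∀ i, 0 < v i}) with hS
    have hSpi : S = Set.pi Set.univ fun i => Set.Ioc 0 (y i) := by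
      ext v
      simp only [hS, Set.mem_inter_iff, Set.mem_setOf_eq, Set.mem_pi, Set.mem_univ,
        Set.mem_Ioc, forall_true_left]
      constructor
      · rintro ⟨h1, h2⟩ i; exact ⟨h2 i, h1 i⟩
      · intro h; exact ⟨fun i => (h i).2, fun i => (h i).1⟩
    have hSmeas : MeasurableSet S := by
      rw [hSpi]
      exact MeasurableSet.univ_pi fun i => measurableSet_Ioc
    have hSvol : 0 < volume S := by
      rw [hSpi, volume_pi_pi]
      rw [pos_iff_ne_zero, Finset.prod_ne_zero_iff]
      intro i _
      simp [Real.volume_Ioc, (hy i)]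
    have hfnn : 0 ≤ᵐ[volume.restrict S] f := by
      refine (ae_restrict_iff' hSmeas).2 (Filter.Eventually.of_forall fun v hv => ?_)
      exact (hfpos v hv.2).le
    rw [hdens y]
    rw [setIntegral_pos_iff_support_of_nonneg_ae hfnn hinty]
    refine lt_of_lt_of_le hSvol (measure_mono fun v hv => ⟨?_, hv⟩)
    exact (hfpos v hv.2).ne'
  -- positive quantities
  have hFx : 0 < P Finset.univ x := hFpos x hx
  set g : Fin n → ℝ := fun i => if i ∈ I then b i else x i with hg
  have hxg : ∀ i, x i ≤ g i := by
    intro i; simp only [hg]; split_ifs; exacts [hxb i, le_rfl]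
  have hG : 0 < P Finset.univ g := lt_of_lt_of_le hFx (hPmono _ _ _ hxg)
  have hFb : 0 < P Finset.univ b := lt_of_lt_of_le hFx (hPmono _ _ _ hxb)
  have hPIx : 0 < P I x := lt_of_lt_of_le hFx (hPset x I)
  have hPIcx : 0 < P Iᶜ x := lt_of_lt_of_le hFx (hPset x Iᶜ)
  have hPIb : 0 < P I b := lt_of_lt_of_le hFb (hPset b I)
  have hPIcb : 0 < P Iᶜ b := lt_of_lt_of_le hFb (hPset b Iᶜ)
  -- inequality A: F(g) P_I(x) ≤ P_I(b) F(x)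
  have hA : P Finset.univ g * P I x ≤ P I b * P Finset.univ x := by
    have hAk : ∀ k : ℕ,
        P Finset.univ g * P Finset.univ (fun i => if i ∈ I then x i else max (k:ℝ) (b i))
          ≤ P Finset.univ (fun i => if i ∈ I then b i else max (k:ℝ) (b i)) * P Finset.univ x := by
      intro k
      have hm := hMTP2 g (fun i => if i ∈ I then x i else max (k:ℝ) (b i))
      have hsup : g ⊔ (fun i => if i ∈ I then x i else max (k:ℝ) (b i))
          = fun i => if i ∈ I then b i else max (k:ℝ) (b i) := by
        funext i
        simp only [Pi.sup_apply, hg]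
        by_cases hi : i ∈ I
        · simp [hi, max_eq_left (hxb i)]
        · simp [hi, max_eq_right (le_max_of_le_right (hxb i))]
      have hinf : g ⊓ (fun i => if i ∈ I then x i else max (k:ℝ) (b i)) = x := by
        funext i
        simp only [Pi.inf_apply, hg]
        by_cases hi : i ∈ I
        · simp [hi, min_eq_right (hxb i)]
        · simp [hi, min_eq_left (le_max_of_le_right (hxb i))]
      rw [hsup, hinf] at hm
      exact hm
    exact le_of_tendsto_of_tendsto' (Filter.Tendsto.const_mul _ (key I x b))
      (Filter.Tendsto.mul_const _ (key I b b)) hAk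
  -- inequality B: F(b) P_{Iᶜ}(x) ≤ P_{Iᶜ}(b) F(g)
  have hB : P Finset.univ b * P Iᶜ x ≤ P Iᶜ b * P Finset.univ g := by
    have hBk : ∀ k : ℕ,
        P Finset.univ b * P Finset.univ (fun i => if i ∈ Iᶜ then x i else max (k:ℝ) (b i))
          ≤ P Finset.univ (fun i => if i ∈ Iᶜ then b i else max (k:ℝ) (b i)) * P Finset.univ g := by
      intro k
      have hm := hMTP2 b (fun i => if i ∈ Iᶜ then x i else max (k:ℝ) (b i))
      have hsup : b ⊔ (fun i => if i ∈ Iᶜ then x i else max (k:ℝ) (b i))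
          = fun i => if i ∈ Iᶜ then b i else max (k:ℝ) (b i) := by
        funext i
        simp only [Pi.sup_apply, Finset.mem_compl]
        by_cases hi : i ∈ I
        · simp [hi, max_eq_right (le_max_of_le_right (le_refl (b i)))]
        · simp [hi, max_eq_left (hxb i)]
      have hinf : b ⊓ (fun i => if i ∈ Iᶜ then x i else max (k:ℝ) (b i)) = g := by
        funext i
        simp only [Pi.inf_apply, Finset.mem_compl, hg]
        by_cases hi : i ∈ I
        · simp [hi, min_eq_left (le_max_of_le_right (le_refl (b i)))]
        · simp [hi, min_eq_right (hxb i)]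
      rw [hsup, hinf] at hm
      exact hm
    exact le_of_tendsto_of_tendsto' (Filter.Tendsto.const_mul _ (key Iᶜ x b))
      (Filter.Tendsto.mul_const _ (key Iᶜ b b)) hBk
  rw [div_le_div_iff₀ (mul_pos hPIb hPIcb) (mul_pos hPIx hPIcx)]
  nlinarith [mul_le_mul_of_nonneg_right hB hPIx.le, mul_le_mul_of_nonneg_left hA hPIcb.le]
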